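/- Let $U$ be a complex manifold, $f : U \to \mathbb{C}^\times$ a holomorphic function with $|f| < 1$ everywhere, and $\varphi$ a nonnegative smooth volume form on $U$. Suppose the integral $I(s) = \int_U |f|^{2s}\varphi$ converges for all real $s$ sufficiently large and admits a meromorphic continuation to $s \in \mathbb{C}$, and let $s_0$ be the maximum of the real parts of the poles of $I(s)$. Then for every real $t > s_0$, the integral $\int_U |f|^{2t}\varphi$ is absolutely convergent. -/

import Mathlib

open MeasureTheory Complex

open scoped Nat

private lemma aux_int {U : Type*} [MeasurableSpace U] {μ : Measure U} {h : U → ℝ}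
    (hm : AEMeasurable h μ) (hpos : ∀ x, 0 < h x) {b c : ℝ} (hbc : b < c)
    (hb : Integrable (fun x => Real.exp (-b * h x)) μ) (n : ℕ) :
    Integrable (fun x => (h x) ^ n * Real.exp (-c * h x)) μ := by
  have hδ : 0 < c - b := sub_pos.2 hbc
  have hmeas : AEStronglyMeasurable (fun x => (h x) ^ n * Real.exp (-c * h x)) μ := by
    exact ((hm.pow_const n).mul
      (Real.measurable_exp.comp_aemeasurable (hm.const_mul (-c)))).aestronglyMeasurable
  refine (hb.const_mul ((n ! : ℝ) / (c - b) ^ n)).mono' hmeas ?_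
  filter_upwards with x
  have hx := hpos x
  have h1 : ((c - b) * h x) ^ n / n ! ≤ Real.exp ((c - b) * h x) :=
    Real.pow_div_factorial_le_exp (x := (c - b) * h x) (by positivity) n
  have h2 : (c - b) ^ n * (h x) ^ n ≤ n ! * Real.exp ((c - b) * h x) := by
    rw [div_le_iff₀ (by positivity : (0:ℝ) < (n ! : ℝ)), mul_pow] at h1
    linarith [h1]
  have hexp : Real.exp (-b * h x) = Real.exp ((c - b) * h x) * Real.exp (-c * h x) := by
    rw [← Real.exp_add]; ring_nf
  rw [Real.norm_eq_abs, _root_.abs_of_nonneg (by positivity)]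
  rw [hexp]
  have h3 : (h x) ^ n * Real.exp (-c * h x) * (c - b) ^ n ≤
      ((n : ℕ)! * Real.exp ((c - b) * h x)) * Real.exp (-c * h x) := by
    have := mul_le_mul_of_nonneg_right h2 (Real.exp_nonneg (-c * h x))
    nlinarith [Real.exp_nonneg (-c * h x)]
  calc (h x) ^ n * Real.exp (-c * h x)
      ≤ (n ! : ℝ) / (c - b) ^ n * (Real.exp ((c - b) * h x) * Real.exp (-c * h x)) := by
        rw [div_mul_eq_mul_div, le_div_iff₀ (by positivity)]
        nlinarith [h3]

private lemma aux_meas {U : Type*} [MeasurableSpace U] {μ : Measure U} {h : U → ℝ}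
    (hm : AEMeasurable h μ) (n : ℕ) (z : ℂ) :
    AEStronglyMeasurable (fun x => (-(h x) : ℂ) ^ n * Complex.exp (-z * h x)) μ := by
  have hc : AEMeasurable (fun x => ((h x : ℂ))) μ :=
    Complex.measurable_ofReal.comp_aemeasurable hm
  exact ((hc.neg.pow_const n).mul
    (Complex.measurable_exp.comp_aemeasurable (hc.const_mul (-z)))).aestronglyMeasurable

private lemma aux_norm (h : ℝ) (n : ℕ) (z : ℂ) :
    ‖(-(h : ℂ)) ^ n * Complex.exp (-z * h)‖ = |h| ^ n * Real.exp (-z.re * h) := by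
  have hre : (-z * (h : ℂ)).re = -z.re * h := by simp
  rw [norm_mul, norm_pow, norm_neg]
  simp only [Complex.norm_exp, Complex.norm_real, Real.norm_eq_abs, hre]

private lemma aux_cint {U : Type*} [MeasurableSpace U] {μ : Measure U} {h : U → ℝ}
    (hm : AEMeasurable h μ) (hpos : ∀ x, 0 < h x) {b : ℝ}
    (hb : Integrable (fun x => Real.exp (-b * h x)) μ) (n : ℕ) {z : ℂ} (hz : b < z.re) :
    Integrable (fun x => (-(h x) : ℂ) ^ n * Complex.exp (-z * h x)) μ := by
  refine (aux_int hm hpos hz hb n).mono' (aux_meas hm n z) ?_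
  filter_upwards with x
  rw [aux_norm, _root_.abs_of_nonneg (hpos x).le]

private lemma aux_deriv {U : Type*} [MeasurableSpace U] {μ : Measure U} {h : U → ℝ}
    (hm : AEMeasurable h μ) (hpos : ∀ x, 0 < h x) {b : ℝ}
    (hb : Integrable (fun x => Real.exp (-b * h x)) μ) (n : ℕ) {s : ℂ} (hs : b < s.re) :
    HasDerivAt (fun z : ℂ => ∫ x, (-(h x) : ℂ) ^ n * Complex.exp (-z * h x) ∂μ)
      (∫ x, (-(h x) : ℂ) ^ (n + 1) * Complex.exp (-s * h x) ∂μ) s := by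
  set ε : ℝ := (s.re - b) / 2 with hε
  have hε0 : 0 < ε := by simp [hε]; linarith
  set c : ℝ := (s.re + b) / 2 with hc
  have hbc : b < c := by simp [hc]; linarith
  have key := hasDerivAt_integral_of_dominated_loc_of_deriv_le (μ := μ)
    (F := fun (z : ℂ) x => (-(h x) : ℂ) ^ n * Complex.exp (-z * h x))
    (F' := fun (z : ℂ) x => (-(h x) : ℂ) ^ (n + 1) * Complex.exp (-z * h x))
    (x₀ := s) (bound := fun x => (h x) ^ (n + 1) * Real.exp (-c * h x)) (Metric.ball_mem_nhds s hε0)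
    ?_ (aux_cint hm hpos hb n hs) (aux_meas hm (n + 1) s) ?_ (aux_int hm hpos hbc hb (n + 1)) ?_
  · exact key.2
  · filter_upwards with z using aux_meas hm n z
  · filter_upwards with x z hzball
    rw [aux_norm, _root_.abs_of_nonneg (hpos x).le]
    have hzre : c ≤ z.re := by
      have h1 : |(z - s).re| ≤ ‖z - s‖ := Complex.abs_re_le_norm _
      have h2 : ‖z - s‖ < ε := by
        rw [← Complex.dist_eq]; exact Metric.mem_ball.mp hzball
      have h3 : |z.re - s.re| < ε := by simpa using lt_of_le_of_lt h1 h2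
      have := abs_lt.mp h3
      simp only [hc, hε] at *
      linarith [this.1]
    have hexp : Real.exp (-z.re * h x) ≤ Real.exp (-c * h x) :=
      Real.exp_le_exp.2 (by nlinarith [(hpos x).le])
    exact mul_le_mul_of_nonneg_left hexp (pow_nonneg (hpos x).le _)
  · filter_upwards with x z hzball
    have hd : HasDerivAt (fun z : ℂ => -z * (h x : ℂ)) (-(h x : ℂ)) z := by
      simpa using ((hasDerivAt_id z).neg.mul_const ((h x : ℂ)))
    have := ((hd.cexp).const_mul ((-(h x) : ℂ) ^ n))
    exact this.congr_deriv (by ring)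

private lemma aux_J_eq {U : Type*} [MeasurableSpace U] (μ : Measure U) (h : U → ℝ) :
    (fun z : ℂ => ∫ x, (-(h x) : ℂ) ^ 0 * Complex.exp (-z * h x) ∂μ)
      = fun z : ℂ => ∫ x, Complex.exp (-z * h x) ∂μ := by
  funext z; simp

private lemma aux_iter {U : Type*} [MeasurableSpace U] {μ : Measure U} {h : U → ℝ}
    (hm : AEMeasurable h μ) (hpos : ∀ x, 0 < h x) {b : ℝ}
    (hb : Integrable (fun x => Real.exp (-b * h x)) μ) (n : ℕ) {s : ℂ} (hs : b < s.re) :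
    iteratedDeriv n (fun z : ℂ => ∫ x, Complex.exp (-z * h x) ∂μ) s
      = ∫ x, (-(h x) : ℂ) ^ n * Complex.exp (-s * h x) ∂μ := by
  induction n generalizing s with
  | zero => simp
  | succ n IH =>
    rw [iteratedDeriv_succ]
    have hopen : IsOpen {z : ℂ | b < z.re} := isOpen_lt continuous_const Complex.continuous_re
    have hev : iteratedDeriv n (fun z : ℂ => ∫ x, Complex.exp (-z * h x) ∂μ)
        =ᶠ[nhds s] (fun z : ℂ => ∫ x, (-(h x) : ℂ) ^ n * Complex.exp (-z * h x) ∂μ) := by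
      filter_upwards [hopen.mem_nhds hs] with z hz
      exact IH hz
    rw [hev.deriv_eq]
    exact (aux_deriv hm hpos hb n hs).deriv

private lemma aux_coeff (p s₁ A : ℝ) (n : ℕ) :
    ((n ! : ℂ))⁻¹ • (((p : ℂ)) - ((s₁ : ℂ))) ^ n • ((-1 : ℂ) ^ n * ((A : ℝ) : ℂ))
      = ((((s₁ - p) ^ n / n ! * A : ℝ)) : ℂ) := by
  rw [smul_eq_mul, smul_eq_mul]
  push_cast
  rw [show ((s₁ : ℂ) - (p : ℂ)) ^ n = ((p : ℂ) - (s₁ : ℂ)) ^ n * (-1 : ℂ) ^ n by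
    rw [← mul_pow]; congr 1; ring]
  ring


/-- Let `U` be a complex manifold (modelled here by a measure space whose measure
`μ` records the nonnegative smooth volume form `φ`), `f : U → ℂˣ` a function with `0 < |f| < 1`
everywhere.  Suppose `I(s) = ∫_U |f|^{2s} φ` converges for all real `s` sufficiently large and
admits a meromorphic continuation `F` to all of `ℂ`, and every pole of `F` has real part `≤ s₀`.
Then for every real `t > s₀` the integral `∫_U |f|^{2t} φ` is absolutely convergent. -/
theorem stmt_0 {U : Type*} [MeasurableSpace U] (μ : Measure U)
    (f : U → ℂ) (hf0 : ∀ x, f x ≠ 0) (hf1 : ∀ x, ‖f x‖ < 1)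
    (F : ℂ → ℂ) (hF : MeromorphicOn F Set.univ)
    (S : ℝ)
    (hconv : ∀ s : ℝ, S ≤ s →
      Integrable (fun x => (‖f x‖) ^ (2 * s)) μ)
    (hagree : ∀ s : ℝ, S ≤ s →
      F s = ∫ x, ((‖f x‖ : ℂ)) ^ (2 * (s : ℂ)) ∂μ)
    (s₀ : ℝ) (hpoles : ∀ a : ℂ, ¬ AnalyticAt ℂ F a → a.re ≤ s₀)
    (t : ℝ) (ht : s₀ < t) :
    Integrable (fun x => (‖f x‖) ^ (2 * t)) μ := by
  by_cases hts : S ≤ t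
  · exact hconv t hts
  push_neg at hts
  have gpos : ∀ x, 0 < ‖f x‖ := fun x => norm_pos_iff.mpr (hf0 x)
  set g : U → ℝ := fun x => ‖f x‖ with hgdef
  set h : U → ℝ := fun x => -(2 * Real.log (g x)) with hh
  have hpos : ∀ x, 0 < h x := by
    intro x
    have := Real.log_neg (gpos x) (hf1 x)
    simp only [hh]
    linarith
  have keyR : ∀ (s : ℝ) (x : U), g x ^ (2 * s) = Real.exp (-s * h x) := by
    intro s x
    rw [Real.rpow_def_of_pos (gpos x)]
    congr 1
    simp only [hh]
    ring
  have keyC : ∀ (s : ℝ) (x : U),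
      ((g x : ℂ)) ^ (2 * (s : ℂ)) = Complex.exp (-(s : ℂ) * (h x : ℝ)) := by
    intro s x
    rw [Complex.cpow_def_of_ne_zero (by exact_mod_cast (gpos x).ne')]
    congr 1
    rw [← Complex.ofReal_log (gpos x).le]
    simp only [hh]
    push_cast
    ring
  have hconv' : ∀ s : ℝ, S ≤ s → Integrable (fun x => Real.exp (-s * h x)) μ := by
    intro s hs
    have := hconv s hs
    change Integrable (fun x => g x ^ (2 * s)) μ at this
    simpa only [keyR s] using this
  have hagree' : ∀ s : ℝ, S ≤ s → F s = ∫ x, Complex.exp (-(s : ℂ) * (h x : ℝ)) ∂μ := by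
    intro s hs
    rw [hagree s hs]
    exact integral_congr_ae (Filter.Eventually.of_forall fun x => keyC s x)
  -- measurability of h
  have hm : AEMeasurable h μ := by
    set m : ℝ := max S 1 with hmdef
    have hm1 : (1:ℝ) ≤ m := le_max_right _ _
    have hgm : AEMeasurable (fun x => g x ^ (2 * m)) μ :=
      (hconv m (le_max_left _ _)).aemeasurable
    have h1 : AEMeasurable (fun x => -(1 / m) * Real.log (g x ^ (2 * m))) μ :=
      (Real.measurable_log.comp_aemeasurable hgm).const_mul _
    refine h1.congr (Filter.Eventually.of_forall fun x => ?_)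
    show -(1 / m) * Real.log (g x ^ (2 * m)) = -(2 * Real.log (g x))
    rw [Real.log_rpow (gpos x)]
    have hm0 : m ≠ 0 := by linarith
    field_simp
    ring
  -- goal reduction
  suffices hint : Integrable (fun x => Real.exp (-t * h x)) μ by
    change Integrable (fun x => g x ^ (2 * t)) μ
    simpa only [keyR t] using hint
  -- setup constants
  set c : ℝ := max S s₀ with hc
  have hcS : S ≤ c := le_max_left _ _
  have hcs₀ : s₀ ≤ c := le_max_right _ _
  have hbint : Integrable (fun x => Real.exp (-c * h x)) μ := hconv' c hcS
  set s₁ : ℝ := c + 1 with hs₁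
  have hcs₁ : c < s₁ := by simp [hs₁]
  set J : ℂ → ℂ := fun z => ∫ x, Complex.exp (-z * (h x : ℝ)) ∂μ with hJ
  have hΩopen : IsOpen {z : ℂ | (c : ℝ) < z.re} := isOpen_lt continuous_const Complex.continuous_re
  have hJan : AnalyticOnNhd ℂ J {z : ℂ | (c : ℝ) < z.re} := by
    refine DifferentiableOn.analyticOnNhd (fun z hz => ?_) hΩopen
    have := aux_deriv hm hpos hbint 0 hz
    rw [aux_J_eq μ h] at this
    exact this.differentiableAt.differentiableWithinAt
  have hFan : ∀ z : ℂ, s₀ < z.re → AnalyticAt ℂ F z := by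
    intro z hz
    by_contra hna
    exact absurd (hpoles z hna) (by linarith)
  have hmem : ((s₁ : ℝ) : ℂ) ∈ {z : ℂ | (c : ℝ) < z.re} := by
    simp only [Set.mem_setOf_eq, Complex.ofReal_re]
    exact hcs₁
  have hfreq : ∃ᶠ z in nhdsWithin ((s₁ : ℝ) : ℂ) {((s₁ : ℝ) : ℂ)}ᶜ, F z = J z := by
    have htend : Filter.Tendsto (fun n : ℕ => ((s₁ + 1 / (n + 1) : ℝ) : ℂ)) Filter.atTop
        (nhdsWithin ((s₁ : ℝ) : ℂ) {((s₁ : ℝ) : ℂ)}ᶜ) := by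
      apply tendsto_nhdsWithin_of_tendsto_nhds_of_eventually_within
      · have h2 : Filter.Tendsto (fun n : ℕ => (s₁ + 1 / (n + 1) : ℝ)) Filter.atTop (nhds s₁) := by
          have h3 : Filter.Tendsto (fun n : ℕ => 1 / ((n : ℝ) + 1)) Filter.atTop (nhds 0) :=
            tendsto_one_div_add_atTop_nhds_zero_nat
          have := tendsto_const_nhds (x := s₁) (f := Filter.atTop (α := ℕ)).add h3
          simpa using this
        exact (Complex.continuous_ofReal.tendsto s₁).comp h2
      · filter_upwards with n
        simp only [Set.mem_compl_iff, Set.mem_singleton_iff]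
        intro hcontra
        have h4 : s₁ + 1 / ((n : ℝ) + 1) = s₁ := by exact_mod_cast hcontra
        have h5 : (0:ℝ) < 1 / ((n : ℝ) + 1) := by positivity
        linarith
    refine htend.frequently (Filter.Frequently.of_forall fun n => ?_)
    have hge : S ≤ s₁ + 1 / ((n : ℝ) + 1) := by
      have h5 : (0:ℝ) < 1 / ((n : ℝ) + 1) := by positivity
      simp only [hs₁]
      linarith
    rw [hagree' _ hge]
  have hEqOn : Set.EqOn F J {z : ℂ | (c : ℝ) < z.re} := by
    refine AnalyticOnNhd.eqOn_of_preconnected_of_frequently_eq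
      (fun z hz => hFan z (lt_of_le_of_lt hcs₀ hz)) hJan
      (convex_halfSpace_re_gt c).isPreconnected hmem hfreq
  -- Taylor series of F at s₁ on ball of radius s₁ - s₀
  have hball : Metric.ball (((s₁ : ℝ)) : ℂ) (s₁ - s₀) ⊆ {z : ℂ | s₀ < z.re} := by
    intro z hz
    simp only [Metric.mem_ball, Complex.dist_eq] at hz
    have h1 : |(z - ((s₁ : ℝ) : ℂ)).re| ≤ ‖z - ((s₁ : ℝ) : ℂ)‖ :=
      Complex.abs_re_le_norm _
    have h2 : |z.re - s₁| < s₁ - s₀ := by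
      simpa using lt_of_le_of_lt h1 hz
    simp only [Set.mem_setOf_eq]
    linarith [(abs_lt.mp h2).1]
  have hFdiff : DifferentiableOn ℂ F (Metric.ball (((s₁ : ℝ)) : ℂ) (s₁ - s₀)) :=
    fun z hz => ((hFan z (hball hz)).differentiableAt).differentiableWithinAt
  set p : ℝ := (s₀ + t) / 2 with hp
  have hps₀ : s₀ < p := by simp only [hp]; linarith
  have hpt : p < t := by simp only [hp]; linarith
  have hps₁ : p < s₁ := by
    have : t < s₁ := lt_of_lt_of_le hts (by simp only [hs₁]; linarith)
    linarith
  have hpmem : (((p : ℝ)) : ℂ) ∈ Metric.ball (((s₁ : ℝ)) : ℂ) (s₁ - s₀) := by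
    simp only [Metric.mem_ball, Complex.dist_eq]
    rw [← Complex.ofReal_sub, Complex.norm_real, Real.norm_eq_abs, abs_of_nonpos (by linarith)]
    linarith
  have hsum := Complex.hasSum_taylorSeries_on_ball hFdiff hpmem
  -- identify the Taylor coefficients
  have hiter : ∀ n : ℕ, iteratedDeriv n F ((s₁ : ℝ) : ℂ)
      = ∫ x, (-(h x) : ℂ) ^ n * Complex.exp (-((s₁ : ℝ) : ℂ) * (h x : ℝ)) ∂μ := by
    intro n
    have hFJev : F =ᶠ[nhds (((s₁ : ℝ)) : ℂ)] J :=
      Filter.eventuallyEq_of_mem (hΩopen.mem_nhds hmem) hEqOn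
    rw [Filter.EventuallyEq.iteratedDeriv_eq n hFJev]
    exact aux_iter hm hpos hbint n (by simpa using hcs₁)
  set a : ℕ → ℝ := fun n => ∫ x, (h x) ^ n * Real.exp (-s₁ * h x) ∂μ with ha
  have ha_nonneg : ∀ n, 0 ≤ a n := fun n =>
    integral_nonneg fun x => mul_nonneg (pow_nonneg (hpos x).le _) (Real.exp_nonneg _)
  have hinteq : ∀ n : ℕ, (∫ x, (-(h x) : ℂ) ^ n * Complex.exp (-((s₁ : ℝ) : ℂ) * (h x : ℝ)) ∂μ)
      = (-1 : ℂ) ^ n * ((a n : ℝ) : ℂ) := by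
    intro n
    have hptwise : ∀ x, (-(h x) : ℂ) ^ n * Complex.exp (-((s₁ : ℝ) : ℂ) * (h x : ℝ))
        = (-1 : ℂ) ^ n * ((((h x) ^ n * Real.exp (-s₁ * h x) : ℝ)) : ℂ) := by
      intro x
      rw [show ((-(h x) : ℂ)) ^ n = (-1 : ℂ) ^ n * ((h x : ℝ) : ℂ) ^ n by
        rw [← mul_pow]; congr 1; ring]
      rw [mul_assoc]
      congr 1
      push_cast [Complex.ofReal_exp]
      ring_nf
    calc (∫ x, (-(h x) : ℂ) ^ n * Complex.exp (-((s₁ : ℝ) : ℂ) * (h x : ℝ)) ∂μ)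
        = ∫ x, (-1 : ℂ) ^ n * ((((h x) ^ n * Real.exp (-s₁ * h x) : ℝ)) : ℂ) ∂μ :=
          integral_congr_ae (Filter.Eventually.of_forall hptwise)
      _ = (-1 : ℂ) ^ n * ∫ x, ((((h x) ^ n * Real.exp (-s₁ * h x) : ℝ)) : ℂ) ∂μ :=
          integral_const_mul _ _
      _ = (-1 : ℂ) ^ n * ((a n : ℝ) : ℂ) := by
          congr 1
          exact integral_ofReal
  set q : ℝ := s₁ - p with hq
  have hq0 : 0 < q := by simp only [hq]; linarith
  have hterm : ∀ n : ℕ, ((n ! : ℂ))⁻¹ • ((((p : ℝ)) : ℂ) - ((s₁ : ℝ) : ℂ)) ^ n •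
      iteratedDeriv n F ((s₁ : ℝ) : ℂ) = (((q ^ n / n ! * a n : ℝ)) : ℂ) := by
    intro n
    rw [hiter n, hinteq n, hq]
    exact aux_coeff p s₁ (a n) n
  rw [funext hterm] at hsum
  have hsumm : Summable (fun n : ℕ => q ^ n / n ! * a n) :=
    Complex.summable_ofReal.mp hsum.summable
  -- Tonelli argument
  have hcs₁' : c < s₁ := hcs₁
  have hψint : ∀ n : ℕ,
      Integrable (fun x => q ^ n / n ! * ((h x) ^ n * Real.exp (-s₁ * h x))) μ :=
    fun n => (aux_int hm hpos hcs₁' hbint n).const_mul _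
  have hψnonneg : ∀ n x, 0 ≤ q ^ n / n ! * ((h x) ^ n * Real.exp (-s₁ * h x)) := by
    intro n x
    have := hpos x
    positivity
  have hψsum : ∀ x, Summable (fun n : ℕ => q ^ n / n ! * ((h x) ^ n * Real.exp (-s₁ * h x))) := by
    intro x
    refine ((Real.summable_pow_div_factorial (q * h x)).mul_right
      (Real.exp (-s₁ * h x))).congr fun n => ?_
    rw [mul_pow]; ring
  have hpoint : ∀ x, (∑' n : ℕ, q ^ n / n ! * ((h x) ^ n * Real.exp (-s₁ * h x)))
      = Real.exp (-p * h x) := by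
    intro x
    have h1 : ∀ n : ℕ, q ^ n / n ! * ((h x) ^ n * Real.exp (-s₁ * h x))
        = (q * h x) ^ n / n ! * Real.exp (-s₁ * h x) := by
      intro n; rw [mul_pow]; ring
    rw [tsum_congr h1, tsum_mul_right]
    have h2 : (∑' n : ℕ, (q * h x) ^ n / n !) = Real.exp (q * h x) := by
      rw [Real.exp_eq_exp_ℝ, NormedSpace.exp_eq_tsum_div]
    rw [h2, ← Real.exp_add]
    congr 1
    simp only [hq]
    ring
  have hlin : (∫⁻ x, ENNReal.ofReal (Real.exp (-p * h x)) ∂μ)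
      = ∑' n : ℕ, ∫⁻ x, ENNReal.ofReal (q ^ n / n ! * ((h x) ^ n * Real.exp (-s₁ * h x))) ∂μ := by
    rw [← lintegral_tsum (fun n => ((hψint n).aemeasurable).ennreal_ofReal)]
    refine lintegral_congr fun x => ?_
    rw [← ENNReal.ofReal_tsum_of_nonneg (hψnonneg · x) (hψsum x), hpoint x]
  have hlfin : (∫⁻ x, ENNReal.ofReal (Real.exp (-p * h x)) ∂μ) < ⊤ := by
    rw [hlin]
    have heach : ∀ n : ℕ, (∫⁻ x, ENNReal.ofReal
        (q ^ n / n ! * ((h x) ^ n * Real.exp (-s₁ * h x))) ∂μ)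
        = ENNReal.ofReal (q ^ n / n ! * a n) := by
      intro n
      rw [← ofReal_integral_eq_lintegral_ofReal (hψint n)
        (Filter.Eventually.of_forall fun x => hψnonneg n x)]
      rw [integral_const_mul]
    simp only [heach]
    rw [← ENNReal.ofReal_tsum_of_nonneg
      (fun n => mul_nonneg (by positivity) (ha_nonneg n)) hsumm]
    exact ENNReal.ofReal_lt_top
  have hpint : Integrable (fun x => Real.exp (-p * h x)) μ := by
    constructor
    · exact (Real.measurable_exp.comp_aemeasurable (hm.const_mul (-p))).aestronglyMeasurable
    · rw [hasFiniteIntegral_iff_ofReal (Filter.Eventually.of_forall fun x => Real.exp_nonneg _)]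
      exact hlfin
  refine hpint.mono'
    ((Real.measurable_exp.comp_aemeasurable (hm.const_mul (-t))).aestronglyMeasurable)
    (Filter.Eventually.of_forall fun x => ?_)
  rw [Real.norm_eq_abs, _root_.abs_of_nonneg (Real.exp_nonneg _)]
  exact Real.exp_le_exp.2 (by nlinarith [(hpos x).le, hpos x])
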